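/- Let G be the threshold graph encoded by a code consisting of t ≥ 0 zeros, followed by a word w that is a concatenation of α copies of a = 01 and β copies of b = 10 in any order, followed by one final (rightmost) digit. Then G has t + 2(α+β) + 1 vertices and exactly (α+β)² + β edges; in particular the number of edges does not depend on t or on the order of the letters a and b in w. -/

import Mathlib

/-!
Common definitions: threshold graphs from binary codes, counts of matchings and
independent sets, lex and colex graphs, and almost alternating codes.

A binary code is a `List Bool` whose head is the *leftmost* (most significant,
last added) digit; `true` stands for the digit `1` and `false` for `0`.
Reading the code from right to left, each digit adds a vertex: a `1` adds a
dominating vertex and a `0` adds an isolated vertex.  Equivalently, the vertex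
at position `i` (from the left) is adjacent to every vertex to its right iff
its digit is `1`.  Note that the value of the rightmost digit (the star) never
affects the graph.
-/

/-- The threshold graph encoded by a binary code `σ`. -/
def threshOf (σ : List Bool) : SimpleGraph (Fin σ.length) where
  Adj i j := i ≠ j ∧ σ.get (min i j) = true
  symm := by
    constructor
    intro i j h
    refine ⟨h.1.symm, ?_⟩
    rw [min_comm]
    exact h.2
  loopless := by
    constructor
    intro i h
    exact h.1 rfl

/-- The number of edges of a graph. -/
noncomputable def edgeCount {V : Type*} (G : SimpleGraph V) : ℕ := Nat.card G.edgeSet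

/-- `M` is a matching of `G`: a set of pairwise disjoint edges of `G`. -/
def IsMatchingSet {V : Type*} (G : SimpleGraph V) (M : Finset (Sym2 V)) : Prop :=
  (∀ e ∈ M, e ∈ G.edgeSet) ∧ ∀ e ∈ M, ∀ f ∈ M, e ≠ f → ∀ v : V, v ∈ e → v ∉ f

/-- `m(G)`: the total number of matchings of `G` (including the empty matching). -/
noncomputable def matchCount {V : Type*} (G : SimpleGraph V) : ℕ :=
  Nat.card {M : Finset (Sym2 V) // IsMatchingSet G M}

/-- `m_k(G)`: the number of matchings of `G` of size `k`. -/
noncomputable def matchCountK {V : Type*} (G : SimpleGraph V) (k : ℕ) : ℕ :=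
  Nat.card {M : Finset (Sym2 V) // IsMatchingSet G M ∧ M.card = k}

/-- `i(G)`: the number of independent sets of `G` (including the empty set). -/
noncomputable def indCount {V : Type*} (G : SimpleGraph V) : ℕ :=
  Nat.card {S : Finset V // ∀ u ∈ S, ∀ v ∈ S, ¬ G.Adj u v}

/-- `i_k(G)`: the number of independent sets of `G` of size `k`. -/
noncomputable def indCountK {V : Type*} (G : SimpleGraph V) (k : ℕ) : ℕ :=
  Nat.card {S : Finset V // (∀ u ∈ S, ∀ v ∈ S, ¬ G.Adj u v) ∧ S.card = k}

/-- Two codes encode the same threshold graph: they have the same length and agree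
except possibly in the rightmost (starred) digit. -/
def CodeEquiv (σ τ : List Bool) : Prop := σ.length = τ.length ∧ σ.dropLast = τ.dropLast

/-- Words that are concatenations of copies of the letters `a = 01` and `b = 10`. -/
inductive IsABWord : List Bool → Prop
  | nil : IsABWord []
  | a {w : List Bool} : IsABWord w → IsABWord (false :: true :: w)
  | b {w : List Bool} : IsABWord w → IsABWord (true :: false :: w)

/-- `w` is a concatenation of `α` copies of the letter `a = 01` and `β` copies of the
letter `b = 10`, in some order. -/
def IsABWordWith (α β : ℕ) (w : List Bool) : Prop :=
  ∃ ls : List (List Bool), (∀ x ∈ ls, x = [false, true] ∨ x = [true, false]) ∧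
    ls.count [false, true] = α ∧ ls.count [true, false] = β ∧ w = ls.flatten

/-- A code is almost alternating if (possibly after reinterpreting the starred rightmost
digit) it is an initial constant block followed by a word in the letters `a = 01` and
`b = 10`, either using the rightmost digit as the final digit of the last letter
(unstarred case) or keeping the rightmost digit separate after the word (starred case). -/
def IsAlmostAltCode (σ : List Bool) : Prop :=
  ∃ τ : List Bool, CodeEquiv σ τ ∧
    ∃ (t : ℕ) (c : Bool) (w : List Bool), IsABWord w ∧
      (τ = List.replicate t c ++ w ∨ ∃ d : Bool, τ = List.replicate t c ++ w ++ [d])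

/-- A small almost alternating code: the initial block consists of `0`'s (or is empty). -/
def IsSmallAACode (σ : List Bool) : Prop :=
  ∃ τ : List Bool, CodeEquiv σ τ ∧
    ∃ (t : ℕ) (w : List Bool), IsABWord w ∧
      (τ = List.replicate t false ++ w ∨ ∃ d : Bool, τ = List.replicate t false ++ w ++ [d])

/-- A large almost alternating code: the initial block is a nonempty block of `1`'s. -/
def IsLargeAACode (σ : List Bool) : Prop :=
  ∃ τ : List Bool, CodeEquiv σ τ ∧
    ∃ (t : ℕ) (w : List Bool), 1 ≤ t ∧ IsABWord w ∧
      (τ = List.replicate t true ++ w ∨ ∃ d : Bool, τ = List.replicate t true ++ w ++ [d])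

/-- A code has a bracketed string if (possibly after reinterpreting the starred rightmost
digit) it contains a substring `1 0^j 1` or `0 1^j 0` with `j ≥ 3`. -/
def HasBracketedString (σ : List Bool) : Prop :=
  ∃ τ : List Bool, CodeEquiv σ τ ∧ ∃ (x y : List Bool) (j : ℕ), 3 ≤ j ∧
    (τ = x ++ [true] ++ List.replicate j false ++ [true] ++ y ∨
     τ = x ++ [false] ++ List.replicate j true ++ [false] ++ y)

/-- A code has a separation issue if it contains two pairs of repeated digits separated by
a substring of odd length, where the first pair is immediately preceded by the opposite
digit and the second pair is followed by at least one further digit. -/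
def HasSeparationIssue (σ : List Bool) : Prop :=
  ∃ (x m y : List Bool) (d c : Bool),
    Odd m.length ∧ y ≠ [] ∧ σ = x ++ [!d, d, d] ++ m ++ [c, c] ++ y

/-- The colex graph `C(n,e)`: the graph on `Fin n` whose edges are the first `e` pairs in
the colexicographic order.  The pair `{i, j}` with `i < j` has rank `j(j-1)/2 + i` in
this order. -/
def colexGraph (n e : ℕ) : SimpleGraph (Fin n) where
  Adj i j := i ≠ j ∧ max i.val j.val * (max i.val j.val - 1) / 2 + min i.val j.val < e
  symm := by
    constructor
    intro i j h
    refine ⟨h.1.symm, ?_⟩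
    rw [max_comm j.val i.val, min_comm j.val i.val]
    exact h.2
  loopless := by
    constructor
    intro i h
    exact h.1 rfl

/-- The lex graph `L(n,e)`: the graph on `Fin n` whose edges are the first `e` pairs in
the lexicographic order.  The pair `{i, j}` with `i < j` has rank
`i(n-1) - i(i-1)/2 + (j - i - 1)` in this order. -/
def lexGraph (n e : ℕ) : SimpleGraph (Fin n) where
  Adj i j := i ≠ j ∧
    min i.val j.val * (n - 1) - min i.val j.val * (min i.val j.val - 1) / 2
      + (max i.val j.val - min i.val j.val - 1) < e
  symm := by
    constructor
    intro i j h
    refine ⟨h.1.symm, ?_⟩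
    rw [max_comm j.val i.val, min_comm j.val i.val]
    exact h.2
  loopless := by
    constructor
    intro i h
    exact h.1 rfl


instance threshOf.instDecidableAdj (σ : List Bool) : DecidableRel (threshOf σ).Adj :=
  fun _ _ => inferInstanceAs (Decidable (_ ∧ _))

open Finset in
lemma thresh_edgeCount (σ : List Bool) :
    edgeCount (threshOf σ) =
      ∑ i : Fin σ.length, if σ.get i then (σ.length - 1 - i.val) else 0 := by
  have h1 : edgeCount (threshOf σ) = (threshOf σ).edgeFinset.card := by
    rw [edgeCount, Nat.card_coe_set_eq, Set.ncard_eq_toFinset_card',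
      SimpleGraph.edgeFinset]
  have h2 := SimpleGraph.two_mul_card_edgeFinset (G := threshOf σ)
  have key : 2 * #(threshOf σ).edgeFinset
      = 2 * ∑ i : Fin σ.length, if σ.get i then (σ.length - 1 - i.val) else 0 := by
    rw [h2, Finset.card_filter, Fintype.sum_prod_type]
    have step : ∀ i j : Fin σ.length,
        (if (threshOf σ).Adj i j then 1 else 0) =
          ((if i < j ∧ σ.get i then 1 else 0) + (if j < i ∧ σ.get j then 1 else 0) : ℕ) := by
      intro i j
      have hadj : (threshOf σ).Adj i j ↔ (i ≠ j ∧ σ.get (min i j) = true) := Iff.rfl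
      rcases lt_trichotomy i j with h | h | h
      · rw [min_eq_left h.le] at hadj
        by_cases hσ : σ.get i = true <;>
          simp [hadj, h, h.ne, h.asymm, hσ]
      · simp [hadj, h]
      · rw [min_eq_right h.le] at hadj
        by_cases hσ : σ.get j = true <;>
          simp [hadj, h, h.ne', h.asymm, hσ]
    calc ∑ i, ∑ j, (if (threshOf σ).Adj i j then 1 else 0)
        = ∑ i, ∑ j, (((if i < j ∧ σ.get i then 1 else 0) : ℕ)
            + (if j < i ∧ σ.get j then 1 else 0)) := by
          refine Finset.sum_congr rfl fun i _ => Finset.sum_congr rfl fun j _ => step i j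
      _ = 2 * ∑ i, ∑ j, ((if i < j ∧ σ.get i then 1 else 0) : ℕ) := by
          simp only [Finset.sum_add_distrib]
          rw [Finset.sum_comm (f := fun i j => ((if j < i ∧ σ.get j then 1 else 0) : ℕ))]
          ring
      _ = 2 * ∑ i : Fin σ.length, if σ.get i then (σ.length - 1 - i.val) else 0 := by
          congr 1
          refine Finset.sum_congr rfl fun i _ => ?_
          by_cases hσ : σ.get i = true
          · simp only [hσ, and_true, if_true]
            rw [← Finset.card_filter,
              show (univ.filter fun j => i < j) = Finset.Ioi i from by ext j; simp,
              Fin.card_Ioi]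
          · simp only [Bool.not_eq_true, List.get_eq_getElem] at hσ
            simp [hσ]
  rw [h1]; omega

def fEdges : List Bool → ℕ
  | [] => 0
  | x :: s => (if x then s.length else 0) + fEdges s

lemma sum_eq_fEdges (σ : List Bool) :
    (∑ i : Fin σ.length, if σ.get i then (σ.length - 1 - i.val) else 0) = fEdges σ := by
  induction σ with
  | nil => simp [fEdges]
  | cons x s ih =>
    have hcast : (∑ i : Fin (x :: s).length,
          if (x :: s).get i = true then (x :: s).length - 1 - i.val else 0)
        = ∑ i : Fin (s.length + 1),
          if (x :: s).get i = true then (s.length + 1) - 1 - i.val else 0 := rfl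
    rw [hcast, Fin.sum_univ_succ, fEdges, ← ih]
    congr 1
    refine Finset.sum_congr rfl fun i _ => ?_
    have h1 : ((x :: s).get i.succ : Bool) = s.get i := rfl
    have h2 : s.length + 1 - 1 - (i.val + 1) = s.length - 1 - i.val := by omega
    rw [h1, Fin.val_succ, h2]

lemma fEdges_replicate_false (t : ℕ) (r : List Bool) :
    fEdges (List.replicate t false ++ r) = fEdges r := by
  induction t with
  | zero => rfl
  | succ n ih => simpa [List.replicate_succ, fEdges] using ih

lemma word_count (ls : List (List Bool))
    (h : ∀ x ∈ ls, x = [false, true] ∨ x = [true, false]) :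
    ls.count [false, true] + ls.count [true, false] = ls.length := by
  induction ls with
  | nil => simp
  | cons x ls ih =>
    have hx := h x (by simp)
    have ih' := ih fun y hy => h y (by simp [hy])
    rcases hx with hx | hx <;> subst hx <;>
      simp [List.count_cons] at * <;> omega

lemma word_f (ls : List (List Bool))
    (h : ∀ x ∈ ls, x = [false, true] ∨ x = [true, false]) (d : Bool) :
    ls.flatten.length = 2 * ls.length ∧
      fEdges (ls.flatten ++ [d]) = ls.length ^ 2 + ls.count [true, false] := by
  induction ls with
  | nil => cases d <;> simp [fEdges]
  | cons x ls ih =>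
    have hx := h x (by simp)
    obtain ⟨hlen, hf⟩ := ih fun y hy => h y (by simp [hy])
    have hlr : (ls.flatten ++ [d]).length = 2 * ls.length + 1 := by simp [hlen]
    rcases hx with hx | hx <;> subst hx
    · refine ⟨by simp [hlen]; ring, ?_⟩
      show fEdges (false :: true :: (ls.flatten ++ [d])) = _
      rw [fEdges, fEdges, hf, if_neg (by simp), if_pos rfl, hlr]
      simp [List.count_cons]
      ring
    · refine ⟨by simp [hlen]; ring, ?_⟩
      show fEdges (true :: false :: (ls.flatten ++ [d])) = _
      rw [fEdges, fEdges, hf, if_pos rfl, if_neg (by simp)]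
      have : (false :: (ls.flatten ++ [d])).length = 2 * ls.length + 2 := by simp [hlen]
      rw [this]
      simp [List.count_cons]
      ring

/-- The threshold graph encoded by `t` zeros, followed by a word `w`
made of `α` copies of `a = 01` and `β` copies of `b = 10` (in any order), followed by
one final (rightmost) digit, has `t + 2(α+β) + 1` vertices and exactly `(α+β)² + β`
edges. -/
theorem small_starred_edge_count (t a b : ℕ) (w : List Bool) (d : Bool)
    (hw : IsABWordWith a b w) :
    (List.replicate t false ++ w ++ [d]).length = t + 2 * (a + b) + 1 ∧
      edgeCount (threshOf (List.replicate t false ++ w ++ [d])) = (a + b) ^ 2 + b := by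
  obtain ⟨ls, hmem, ha, hb, hflat⟩ := hw
  obtain ⟨hlen, hf⟩ := word_f ls hmem d
  have hab : a + b = ls.length := by rw [← ha, ← hb]; exact word_count ls hmem
  constructor
  · simp only [List.length_append, List.length_replicate, List.length_singleton,
      hflat, hlen]
    omega
  · rw [thresh_edgeCount, sum_eq_fEdges, hflat,
      show List.replicate t false ++ ls.flatten ++ [d]
          = List.replicate t false ++ (ls.flatten ++ [d]) from by
        rw [List.append_assoc],
      fEdges_replicate_false, hf, hb, ← hab]
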